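/- Let T be the weighted shift on l² with weights a_j = 1/2 for j even and a_j = 3/2 for j odd. Then M(T) = S (the unilateral shift, an isometry), T² = (3/4)S², the spectral radius of T is sqrt(3)/2 < 1, and T is not an m-isometry for any m ≥ 1. -/

import Mathlib

noncomputable section
set_option synthInstance.maxHeartbeats 1000000
set_option maxHeartbeats 1000000

/-- The Hilbert space `ℓ²(ℕ, ℂ)`. -/
abbrev Ell2 := lp (fun _ : ℕ => ℂ) 2

/-- The canonical orthonormal basis of `ℓ²` (indexed from `0`; the paper's index `j ≥ 1`
corresponds to our index `j - 1`). -/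
noncomputable def e (j : ℕ) : Ell2 := lp.single 2 j 1

/-- `T` is an `m`-isometry: `∑_{k=0}^m (-1)^k C(m,k) ‖T^k x‖² = 0` for all `x`. -/
def IsMIsometry (T : Ell2 →L[ℂ] Ell2) (m : ℕ) : Prop :=
  ∀ x : Ell2,
    ∑ k ∈ Finset.range (m + 1), (-1 : ℝ) ^ k * (m.choose k : ℝ) * ‖(T ^ k) x‖ ^ 2 = 0

noncomputable def bEll2 : HilbertBasis ℕ ℂ Ell2 :=
  HilbertBasis.ofRepr (LinearIsometryEquiv.refl ℂ Ell2)

lemma bEll2_eq : ⇑bEll2 = e := by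
  funext i
  have h := bEll2.repr_self i
  calc bEll2 i = bEll2.repr (bEll2 i) := rfl
    _ = lp.single 2 i 1 := h
    _ = e i := by unfold e; congr 1

lemma orthonormal_e : Orthonormal ℂ e := bEll2_eq ▸ bEll2.orthonormal

set_option synthInstance.maxHeartbeats 1000000 in
instance : T2Space Ell2 := inferInstance

lemma dense_span_e : Dense (Submodule.span ℂ (Set.range e) : Set Ell2) := by
  have h := bEll2.dense_span
  rw [bEll2_eq] at h
  rw [Submodule.dense_iff_topologicalClosure_eq_top]
  exact h

lemma norm_e (j : ℕ) : ‖e j‖ = 1 := by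
  have : ‖lp.single (E := fun _ : ℕ => ℂ) 2 j ((fun _ => (1:ℂ)) j)‖ = ‖(1:ℂ)‖ :=
    lp.norm_single (E := fun _ : ℕ => ℂ) (p := 2) (by norm_num) j (1:ℂ)
  simpa [e] using this

lemma sqrt34 : Real.sqrt (3/4) = Real.sqrt 3 / 2 := by
  rw [show (3/4 : ℝ) = 3 / 2^2 by norm_num, Real.sqrt_div (by norm_num : (0:ℝ) ≤ 3),
    Real.sqrt_sq (by norm_num : (0:ℝ) ≤ 2)]

/-- the weighted shift with weights `3/2, 1/2, 3/2, 1/2, …` (paper: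
`a_j = 1/2` for `j` even, `3/2` for `j` odd, indexed from `1`; our `w j` is the paper's
`a_{j+1}`) has mean transform equal to the unilateral shift `S` (an isometry), satisfies
`T² = (3/4) S²`, has spectral radius `√3/2 < 1`, and is not an `m`-isometry for any
`m ≥ 1`. -/
theorem counterexample_mean_transform_isometry
    (w : ℕ → ℝ) (hw : ∀ j, w j = if Even j then 3 / 2 else 1 / 2)
    (T S M : Ell2 →L[ℂ] Ell2)
    (hT : ∀ j, T (e j) = ((w j : ℝ) : ℂ) • e (j + 1))
    (hS : ∀ j, S (e j) = e (j + 1))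
    (hM : ∀ j, M (e j) = (((w j + w (j + 1)) / 2 : ℝ) : ℂ) • e (j + 1)) :
    M = S ∧ (∀ x : Ell2, ‖S x‖ = ‖x‖) ∧
      T ^ 2 = (3 / 4 : ℂ) • S ^ 2 ∧
      spectralRadius ℂ T = ENNReal.ofReal (Real.sqrt 3 / 2) ∧
      Real.sqrt 3 / 2 < 1 ∧
      (∀ m : ℕ, 1 ≤ m → ¬ IsMIsometry T m) := by
  -- w facts
  have hw2 : ∀ j, w j + w (j + 1) = 2 := by
    intro j
    rcases Nat.even_or_odd j with h | h
    · rw [hw j, hw (j+1), if_pos h,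
        if_neg (by rw [Nat.even_add_one]; exact not_not_intro h)]
      norm_num
    · rw [hw j, hw (j+1), if_neg (Nat.not_even_iff_odd.mpr h),
        if_pos (Nat.even_add_one.mpr (Nat.not_even_iff_odd.mpr h))]
      norm_num
  have hwmul : ∀ j, w j * w (j + 1) = 3 / 4 := by
    intro j
    rcases Nat.even_or_odd j with h | h
    · rw [hw j, hw (j+1), if_pos h,
        if_neg (by rw [Nat.even_add_one]; exact not_not_intro h)]
      norm_num
    · rw [hw j, hw (j+1), if_neg (Nat.not_even_iff_odd.mpr h),
        if_pos (Nat.even_add_one.mpr (Nat.not_even_iff_odd.mpr h))]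
      norm_num
  -- M = S
  have hMS : M = S := by
    apply ContinuousLinearMap.ext_on dense_span_e
    rintro _ ⟨j, rfl⟩
    rw [hM j, hS j, hw2 j]
    norm_num
  -- S is an isometry
  have hSiso : ∀ x : Ell2, ‖S x‖ = ‖x‖ := by
    have hclosed : IsClosed {x : Ell2 | ‖S x‖ = ‖x‖} :=
      isClosed_eq (by fun_prop) (by fun_prop)
    have hsub : (Submodule.span ℂ (Set.range e) : Set Ell2) ⊆ {x : Ell2 | ‖S x‖ = ‖x‖} := by
      intro x hx
      rw [SetLike.mem_coe, Finsupp.mem_span_range_iff_exists_finsupp] at hx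
      obtain ⟨c, rfl⟩ := hx
      have he' : Orthonormal ℂ (fun j => e (j + 1)) :=
        orthonormal_e.comp _ (fun a b h => by omega)
      simp only [Set.mem_setOf_eq, Finsupp.sum, map_sum, map_smul, hS]
      have h1 := orthonormal_e.inner_sum (fun i => c i) (fun i => c i) (s := c.support)
      have h2 := he'.inner_sum (fun i => c i) (fun i => c i) (s := c.support)
      rw [@norm_eq_sqrt_re_inner ℂ, @norm_eq_sqrt_re_inner ℂ, h1, h2]
    intro x
    have : (Set.univ : Set Ell2) ⊆ {x : Ell2 | ‖S x‖ = ‖x‖} := by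
      have := hclosed.closure_subset_iff.mpr hsub
      rwa [dense_span_e.closure_eq] at this
    exact this (Set.mem_univ x)
  -- T² = (3/4) S²
  have hT2 : T ^ 2 = (3 / 4 : ℂ) • S ^ 2 := by
    apply ContinuousLinearMap.ext_on dense_span_e
    rintro _ ⟨j, rfl⟩
    simp only [pow_two, ContinuousLinearMap.smul_apply, ContinuousLinearMap.mul_apply]
    rw [hT j, map_smul, hT (j+1), hS j, hS (j+1), smul_smul, ← Complex.ofReal_mul, hwmul j]
    norm_num
  -- norms of powers of S
  have hSpow : ∀ (n : ℕ) (x : Ell2), ‖(S ^ n) x‖ = ‖x‖ := by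
    intro n
    induction n with
    | zero => intro x; simp
    | succ n ih =>
      intro x
      rw [pow_succ, ContinuousLinearMap.mul_apply, ih, hSiso]
  have hSpow_norm : ∀ n : ℕ, ‖S ^ n‖ = 1 := by
    intro n
    refine le_antisymm ?_ ?_
    · apply ContinuousLinearMap.opNorm_le_bound _ zero_le_one
      intro x; rw [hSpow, one_mul]
    · have h0 := (S ^ n).le_opNorm (e 0)
      rw [hSpow, norm_e] at h0
      simpa using h0
  -- ‖T^(2k)‖
  have hT2k : ∀ k : ℕ, ‖T ^ (2 * k)‖ = (3 / 4 : ℝ) ^ k := by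
    intro k
    have h1 : T ^ (2 * k) = ((3 / 4 : ℂ) ^ k) • S ^ (2 * k) := by
      rw [pow_mul, hT2, smul_pow, ← pow_mul]
    rw [h1, norm_smul ((3/4 : ℂ) ^ k) (S ^ (2 * k)), hSpow_norm, mul_one, norm_pow,
      show ((3:ℂ)/4) = ((3/4 : ℝ) : ℂ) by norm_num, Complex.norm_real]
    norm_num
  -- spectral radius
  have hsr : spectralRadius ℂ T = ENNReal.ofReal (Real.sqrt 3 / 2) := by
    have hmain := spectrum.pow_nnnorm_pow_one_div_tendsto_nhds_spectralRadius T
    have hcomp : Filter.Tendsto (fun k : ℕ => 2 * (k + 1)) Filter.atTop Filter.atTop :=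
      Filter.tendsto_atTop_mono (fun k => by omega : ∀ k : ℕ, k ≤ 2 * (k + 1))
        Filter.tendsto_id
    have hsub := hmain.comp hcomp
    have hconst : ∀ k : ℕ,
        ((‖T ^ (2 * (k + 1))‖₊ : ENNReal) ^ (1 / ((2 * (k + 1) : ℕ) : ℝ) : ℝ))
          = ENNReal.ofReal (Real.sqrt 3 / 2) := by
      intro k
      rw [← enorm_eq_nnnorm, ← ofReal_norm, hT2k (k+1),
        ENNReal.ofReal_rpow_of_pos (by positivity)]
      congr 1
      rw [← Real.rpow_natCast (3/4 : ℝ) (k+1), ← Real.rpow_mul (by norm_num)]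
      have hx : ((k+1 : ℕ) : ℝ) * (1 / ((2 * (k + 1) : ℕ) : ℝ)) = 1/2 := by
        have : ((k:ℝ) + 1) ≠ 0 := by positivity
        push_cast
        field_simp
      rw [hx, ← Real.sqrt_eq_rpow, sqrt34]
    have hlim : Filter.Tendsto (fun _ : ℕ => ENNReal.ofReal (Real.sqrt 3 / 2)) Filter.atTop
        (nhds (spectralRadius ℂ T)) :=
      Filter.Tendsto.congr (fun k => (hconst k)) hsub
    exact tendsto_nhds_unique hlim tendsto_const_nhds
  refine ⟨hMS, hSiso, hT2, hsr, ?_, ?_⟩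
  · rw [div_lt_one (by norm_num)]
    have := Real.sq_sqrt (by norm_num : (0:ℝ) ≤ 3)
    nlinarith [Real.sqrt_nonneg 3]
  · -- not an m-isometry
    intro m hm hiso
    have hTk : ∀ k : ℕ, (T ^ k) (e 0) = (((∏ i ∈ Finset.range k, w i : ℝ)) : ℂ) • e k := by
      intro k
      induction k with
      | zero => simp
      | succ k ih =>
        rw [pow_succ', ContinuousLinearMap.mul_apply, ih, map_smul, hT k, smul_smul,
          ← Complex.ofReal_mul, ← Finset.prod_range_succ]
    have hprod : ∀ k : ℕ, (∏ i ∈ Finset.range k, w i) ^ 2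
        = 2 * (3/4 : ℝ) ^ k - (-(3/4) : ℝ) ^ k := by
      intro k
      induction k with
      | zero => norm_num
      | succ k ih =>
        rw [Finset.prod_range_succ, mul_pow, ih]
        rcases Nat.even_or_odd k with h | h
        · rw [hw k, if_pos h, h.neg_pow, (h.add_one).neg_pow]
          ring
        · rw [hw k, if_neg (Nat.not_even_iff_odd.mpr h), h.neg_pow,
            (h.add_one).neg_pow]
          ring
    have hnorm2 : ∀ k : ℕ, ‖(T ^ k) (e 0)‖ ^ 2
        = 2 * (3/4 : ℝ) ^ k - (-(3/4) : ℝ) ^ k := by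
      intro k
      rw [hTk k, norm_smul, norm_e, mul_one, Complex.norm_real, Real.norm_eq_abs,
        sq_abs, hprod k]
    have hzero := hiso (e 0)
    have hsum : ∑ k ∈ Finset.range (m + 1), (-1 : ℝ) ^ k * (m.choose k : ℝ) * ‖(T ^ k) (e 0)‖ ^ 2
        = 2 * (1/4 : ℝ) ^ m - (7/4 : ℝ) ^ m := by
      have h1 : ((-(3/4) : ℝ) + 1) ^ m
          = ∑ k ∈ Finset.range (m + 1), (-(3/4) : ℝ) ^ k * 1 ^ (m - k) * (m.choose k : ℝ) :=
        add_pow _ _ _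
      have h2 : (((3/4) : ℝ) + 1) ^ m
          = ∑ k ∈ Finset.range (m + 1), ((3/4) : ℝ) ^ k * 1 ^ (m - k) * (m.choose k : ℝ) :=
        add_pow _ _ _
      calc ∑ k ∈ Finset.range (m + 1), (-1 : ℝ) ^ k * (m.choose k : ℝ) * ‖(T ^ k) (e 0)‖ ^ 2
          = ∑ k ∈ Finset.range (m + 1), (2 * ((-(3/4) : ℝ) ^ k * 1 ^ (m-k) * (m.choose k : ℝ))
            - ((3/4) : ℝ) ^ k * 1 ^ (m-k) * (m.choose k : ℝ)) := by
            apply Finset.sum_congr rfl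
            intro k _
            rw [hnorm2 k]
            have e1 : ((-1:ℝ))^k * (3/4)^k = (-(3/4):ℝ)^k := by
              rw [← mul_pow]; norm_num
            have e2 : ((-1:ℝ))^k * (-(3/4):ℝ)^k = ((3/4):ℝ)^k := by
              rw [← mul_pow]; norm_num
            simp only [one_pow, mul_one]
            linear_combination (2 * (m.choose k : ℝ)) * e1 - (m.choose k : ℝ) * e2
          _ = 2 * (1/4 : ℝ) ^ m - (7/4 : ℝ) ^ m := by
            rw [Finset.sum_sub_distrib, ← Finset.mul_sum, ← h1, ← h2]
            norm_num
    rw [hsum] at hzero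
    have hle : (1/4 : ℝ) ^ m ≤ 1/4 := by
      calc (1/4 : ℝ) ^ m ≤ (1/4 : ℝ) ^ 1 :=
            pow_le_pow_of_le_one (by norm_num) (by norm_num) hm
      _ = 1/4 := pow_one _
    have hge : (7/4 : ℝ) ^ m ≥ 7/4 := by
      calc (7/4 : ℝ) ^ m ≥ (7/4 : ℝ) ^ 1 := pow_le_pow_right₀ (by norm_num) hm
      _ = 7/4 := pow_one _
    linarith
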